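/- arXiv:2404.12589 — 2 statements merged into one kernel-verified Lean document; each statement's English description precedes it below -/
import Mathlib

section
/- Let 𝒳 = 𝒳⁽¹⁾ × ⋯ × 𝒳⁽ᵈ⁾ be a finite product state space and let π = ⊗_{i=1}^d π⁽ⁱ⁾ be a strictly positive product distribution with π⁽ⁱ⁾ ∈ 𝒫(𝒳⁽ⁱ⁾). Suppose M ∈ ℒ(𝒳) is π-stationary and Lᵢ ∈ ℒ(𝒳⁽ⁱ⁾) is π⁽ⁱ⁾-stationary for each i. Then D_f^π(M ‖ ⊗_{i=1}^d Lᵢ) = D_f^π(M* ‖ ⊗_{i=1}^d Lᵢ*), where M* is the π-dual of M and Lᵢ* is the π⁽ⁱ⁾-dual of Lᵢ. In particular, if each Lᵢ is π⁽ⁱ⁾-reversible, then D_f^π(M ‖ ⊗_{i=1}^d Lᵢ) = D_f^π(M* ‖ ⊗_{i=1}^d Lᵢ). -/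
open Filter Finset
open scoped Classical

/-- `p` is a probability mass on the finite set `Y`. -/
def IsProbMass {Y : Type*} [Fintype Y] (p : Y → ℝ) : Prop :=
  (∀ x, 0 ≤ p x) ∧ ∑ x, p x = 1

/-- `M` is a transition matrix (row-stochastic matrix) on the finite set `Y`. -/
def IsTransMat {Y : Type*} [Fintype Y] (M : Y → Y → ℝ) : Prop :=
  (∀ x y, 0 ≤ M x y) ∧ ∀ x, ∑ y, M x y = 1

/-- The tensor product `⊗ᵢ Lᵢ` of transition matrices on a finite product space. -/
noncomputable def tensorMat {d : ℕ} {X : Fin d → Type*} (L : ∀ i, X i → X i → ℝ) :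
    (∀ i, X i) → (∀ i, X i) → ℝ :=
  fun x y => ∏ i, L i (x i) (y i)

/-- `f'(∞) := lim_{x→0⁺} x f(1/x)`, as an extended real (realized as a limsup). -/
noncomputable def fPrimeInf (f : ℝ → ℝ) : EReal :=
  Filter.limsup (fun x : ℝ => ((x * f (1 / x) : ℝ) : EReal)) (nhdsWithin 0 (Set.Ioi 0))

/-- The term `L(x,y)·f(M(x,y)/L(x,y))` with the conventions `0·f(0/0) := 0` and
`0·f(a/0) := a·f'(∞)` for `a > 0`. -/
noncomputable def fDivTerm (f : ℝ → ℝ) (m l : ℝ) : EReal :=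
  if l = 0 then (if m = 0 then 0 else (m : EReal) * fPrimeInf f)
  else ((l * f (m / l) : ℝ) : EReal)

/-- The `f`-divergence `D_f^π(M ‖ L)` between transition matrices, with the convention
`0·∞ := 0` (EReal multiplication). -/
noncomputable def fDiv {Y : Type*} [Fintype Y] (f : ℝ → ℝ) (π : Y → ℝ) (M L : Y → Y → ℝ) :
    EReal :=
  ∑ x, (π x : EReal) * ∑ y, fDivTerm f (M x y) (L x y)

/-- The `π`-dual (time reversal) `P*` of a transition matrix `P`. -/
noncomputable def timeRev {Y : Type*} (π : Y → ℝ) (M : Y → Y → ℝ) : Y → Y → ℝ :=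
  fun x y => π y * M y x / π x


lemma ereal_coe_mul_bot {c : ℝ} (hc : 0 < c) : (c : EReal) * ⊥ = ⊥ :=
  EReal.mul_bot_of_pos (EReal.coe_pos.2 hc)

lemma ereal_coe_mul_top {c : ℝ} (hc : 0 < c) : (c : EReal) * ⊤ = ⊤ :=
  EReal.coe_mul_top_of_pos hc

lemma ereal_coe_mul_coe_mul {a b : ℝ} (ha : 0 < a) (hb : 0 < b) (t : EReal) :
    (a : EReal) * ((b : EReal) * t) = ((a * b : ℝ) : EReal) * t := by
  induction t with
  | bot => rw [ereal_coe_mul_bot hb, ereal_coe_mul_bot ha, ereal_coe_mul_bot (mul_pos ha hb)]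
  | coe t => rw [← EReal.coe_mul, ← EReal.coe_mul, ← EReal.coe_mul, mul_assoc]
  | top => rw [ereal_coe_mul_top hb, ereal_coe_mul_top ha, ereal_coe_mul_top (mul_pos ha hb)]

lemma ereal_coe_mul_add {c : ℝ} (hc : 0 < c) (a b : EReal) :
    (c : EReal) * (a + b) = (c : EReal) * a + (c : EReal) * b := by
  induction a with
  | bot => rw [EReal.bot_add, ereal_coe_mul_bot hc, EReal.bot_add]
  | coe a =>
    induction b with
    | bot => rw [EReal.add_bot, ereal_coe_mul_bot hc, EReal.add_bot]
    | coe b => rw [← EReal.coe_add, ← EReal.coe_mul, ← EReal.coe_mul, ← EReal.coe_mul,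
        ← EReal.coe_add, mul_add]
    | top => rw [EReal.coe_add_top, ereal_coe_mul_top hc, ← EReal.coe_mul, EReal.coe_add_top]
  | top =>
    induction b with
    | bot => rw [EReal.add_bot, ereal_coe_mul_bot hc, EReal.add_bot]
    | coe b => rw [EReal.top_add_coe, ereal_coe_mul_top hc, ← EReal.coe_mul,
        EReal.top_add_coe]
    | top => rw [EReal.top_add_top, ereal_coe_mul_top hc, EReal.top_add_top]

lemma ereal_coe_mul_sum {ι : Type*} (s : Finset ι) {c : ℝ} (hc : 0 < c) (g : ι → EReal) :
    (c : EReal) * ∑ i ∈ s, g i = ∑ i ∈ s, (c : EReal) * g i := by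
  induction s using Finset.induction with
  | empty => simp
  | insert a s h ih => rw [Finset.sum_insert h, Finset.sum_insert h, ereal_coe_mul_add hc, ih]

lemma fDivTerm_scale (f : ℝ → ℝ) {c : ℝ} (hc : 0 < c) {m : ℝ} (hm0 : 0 ≤ m) (l : ℝ) :
    fDivTerm f (c * m) (c * l) = (c : EReal) * fDivTerm f m l := by
  unfold fDivTerm
  by_cases hl : l = 0
  · subst hl
    rw [mul_zero, if_pos rfl, if_pos rfl]
    by_cases hm : m = 0
    · simp [hm]
    · rw [if_neg hm, if_neg (mul_ne_zero hc.ne' hm),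
        ereal_coe_mul_coe_mul hc (lt_of_le_of_ne hm0 (Ne.symm hm))]
  · have hcl : c * l ≠ 0 := mul_ne_zero hc.ne' hl
    rw [if_neg hcl, if_neg hl, mul_div_mul_left m l hc.ne', ← EReal.coe_mul, mul_assoc]

lemma fDiv_timeRev {Y : Type*} [Fintype Y] (f : ℝ → ℝ) (π : Y → ℝ) (hπ : ∀ x, 0 < π x)
    (M L : Y → Y → ℝ) (hM : ∀ x y, 0 ≤ M x y) :
    fDiv f π M L = fDiv f π (timeRev π M) (timeRev π L) := by
  have key : ∀ x, (π x : EReal) * ∑ y, fDivTerm f (timeRev π M x y) (timeRev π L x y)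
      = ∑ y, (π y : EReal) * fDivTerm f (M y x) (L y x) := by
    intro x
    rw [ereal_coe_mul_sum _ (hπ x)]
    refine Finset.sum_congr rfl fun y _ => ?_
    have hc : 0 < π y / π x := div_pos (hπ y) (hπ x)
    have h1 : timeRev π M x y = (π y / π x) * M y x := by unfold timeRev; ring
    have h2 : timeRev π L x y = (π y / π x) * L y x := by unfold timeRev; ring
    have h3 : π x * (π y / π x) = π y := by
      rw [mul_comm, div_mul_cancel₀ _ (hπ x).ne']
    rw [h1, h2, fDivTerm_scale f hc (hM y x), ereal_coe_mul_coe_mul (hπ x) hc, h3]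
  unfold fDiv
  rw [Finset.sum_congr rfl fun x _ => key x, Finset.sum_comm]
  exact Finset.sum_congr rfl fun y _ => ereal_coe_mul_sum _ (hπ y) _

/-- Bisection property: for a `π`-stationary `M` (with `π` a strictly positive product
distribution) and `π⁽ⁱ⁾`-stationary `Lᵢ`, the `f`-divergence is invariant under taking
time reversals of both arguments; if moreover each `Lᵢ` is `π⁽ⁱ⁾`-reversible, one may
reverse only the first argument. -/
theorem stmt4 {d : ℕ} {X : Fin d → Type*} [∀ i, Fintype (X i)]
    (f : ℝ → ℝ) (hconv : ConvexOn ℝ (Set.Ioi (0 : ℝ)) f) (hf1 : f 1 = 0)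
    (πs : ∀ i, X i → ℝ) (hπs : ∀ i, IsProbMass (πs i)) (hpos : ∀ i xi, 0 < πs i xi)
    (M : (∀ i, X i) → (∀ i, X i) → ℝ) (hM : IsTransMat M)
    (hMstat : ∀ y, ∑ x : ∀ i, X i, (∏ i, πs i (x i)) * M x y = ∏ i, πs i (y i))
    (L : ∀ i, X i → X i → ℝ) (hL : ∀ i, IsTransMat (L i))
    (hLstat : ∀ i yi, ∑ xi, πs i xi * L i xi yi = πs i yi) :
    fDiv f (fun x : ∀ i, X i => ∏ i, πs i (x i)) M (tensorMat L) =
        fDiv f (fun x : ∀ i, X i => ∏ i, πs i (x i))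
          (timeRev (fun x : ∀ i, X i => ∏ i, πs i (x i)) M)
          (tensorMat fun i => timeRev (πs i) (L i)) ∧
      ((∀ i xi yi, πs i xi * L i xi yi = πs i yi * L i yi xi) →
        fDiv f (fun x : ∀ i, X i => ∏ i, πs i (x i)) M (tensorMat L) =
          fDiv f (fun x : ∀ i, X i => ∏ i, πs i (x i))
            (timeRev (fun x : ∀ i, X i => ∏ i, πs i (x i)) M) (tensorMat L)) := by
  classical
  set π : (∀ i, X i) → ℝ := fun x => ∏ i, πs i (x i) with hπdef
  have hπ : ∀ x, 0 < π x := fun x => Finset.prod_pos fun i _ => hpos i (x i)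
  have htL : ∀ x y, 0 ≤ tensorMat L x y := fun x y =>
    Finset.prod_nonneg fun i _ => (hL i).1 _ _
  have htensor : (tensorMat fun i => timeRev (πs i) (L i)) = timeRev π (tensorMat L) := by
    funext x y
    unfold tensorMat timeRev
    rw [Finset.prod_div_distrib, Finset.prod_mul_distrib]
  constructor
  · rw [htensor]
    exact fDiv_timeRev f π hπ M (tensorMat L) hM.1
  · intro hrev
    have hLL : (tensorMat fun i => timeRev (πs i) (L i)) = tensorMat L := by
      funext x y
      unfold tensorMat timeRev
      refine Finset.prod_congr rfl fun i _ => ?_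
      dsimp only
      rw [hrev i (y i) (x i), mul_comm, mul_div_assoc, div_self (hpos i (x i)).ne', mul_one]
    have h := fDiv_timeRev f π hπ M (tensorMat L) hM.1
    rw [← htensor, hLL] at h
    exact h
end

section
/- Let 𝒳 = 𝒳⁽¹⁾ × ⋯ × 𝒳⁽ᵈ⁾ be a finite product state space, let π ∈ 𝒫(𝒳) be strictly positive, P ∈ ℒ(𝒳) and Lᵢ ∈ ℒ(𝒳⁽ⁱ⁾) for i = 1,…,d. Then the Pythagorean identity holds: D_KL^π(P ‖ ⊗_{i=1}^d Lᵢ) = D_KL^π(P ‖ ⊗_{i=1}^d P_π⁽ⁱ⁾) + Σ_{i=1}^d D_KL^{π⁽ⁱ⁾}(P_π⁽ⁱ⁾ ‖ Lᵢ), where both sides may be +∞. Consequently ⊗_{i=1}^d P_π⁽ⁱ⁾ is the unique minimizer of (L₁,…,L_d) ↦ D_KL^π(P ‖ ⊗_{i=1}^d Lᵢ), and 𝕀^π(P) = D_KL^π(P ‖ ⊗_{i=1}^d P_π⁽ⁱ⁾). -/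
open Filter Finset
open scoped Classical

/-- The term `M(x,y)·ln(M(x,y)/L(x,y))` with the conventions `0·ln(0/·) := 0` and
`a·ln(a/0) := +∞` for `a > 0`. -/
noncomputable def klTerm (m l : ℝ) : EReal :=
  if m = 0 then 0 else if l = 0 then ⊤ else ((m * Real.log (m / l) : ℝ) : EReal)

/-- The KL divergence `D_KL^π(M ‖ L)` between transition matrices, with the convention
`0·∞ := 0` (EReal multiplication). -/
noncomputable def klDiv {Y : Type*} [Fintype Y] (π : Y → ℝ) (M L : Y → Y → ℝ) : EReal :=
  ∑ x, (π x : EReal) * ∑ y, klTerm (M x y) (L x y)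

/-- The `i`-th marginal `π⁽ⁱ⁾` of a probability mass `π` on a finite product space. -/
noncomputable def margDist {d : ℕ} {X : Fin d → Type*} [∀ i, Fintype (X i)]
    (π : (∀ i, X i) → ℝ) (i : Fin d) : X i → ℝ :=
  fun xi => ∑ x : ∀ j, X j, if x i = xi then π x else 0

/-- The `i`-th marginal transition matrix `P_π⁽ⁱ⁾` of `P` with respect to `π`. -/
noncomputable def margKer {d : ℕ} {X : Fin d → Type*} [∀ i, Fintype (X i)]
    (π : (∀ i, X i) → ℝ) (P : (∀ i, X i) → (∀ i, X i) → ℝ) (i : Fin d) : X i → X i → ℝ :=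
  fun xi yi =>
    (∑ x : ∀ j, X j, ∑ y : ∀ j, X j, if x i = xi ∧ y i = yi then π x * P x y else 0) /
      margDist π i xi

/-- The distance to independence `𝕀^π(P)` with respect to the KL divergence. -/
noncomputable def distIndepKL {d : ℕ} {X : Fin d → Type*} [∀ i, Fintype (X i)]
    (π : (∀ i, X i) → ℝ) (P : (∀ i, X i) → (∀ i, X i) → ℝ) : EReal :=
  ⨅ (L : ∀ i, X i → X i → ℝ) (_ : ∀ i, IsTransMat (L i)), klDiv π P (tensorMat L)

lemma klTerm_ne_bot (m l : ℝ) : klTerm m l ≠ ⊥ := by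
  unfold klTerm; split_ifs <;> simp [← EReal.coe_mul]

lemma klTerm_eq_coe {m l : ℝ} (h : m = 0 ∨ l ≠ 0) :
    klTerm m l = ((m * Real.log (m / l) : ℝ) : EReal) := by
  unfold klTerm
  rcases h with h | h
  · simp [h]
  · split_ifs with h1
    · simp [h1]
    · rfl

lemma klTerm_eq_top {m l : ℝ} (hm : m ≠ 0) (hl : l = 0) : klTerm m l = ⊤ := by
  unfold klTerm; simp [hm, hl]

lemma ereal_coe_sum {α : Type*} (s : Finset α) (f : α → ℝ) :
    ((∑ a ∈ s, f a : ℝ) : EReal) = ∑ a ∈ s, (f a : EReal) := by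
  induction s using Finset.cons_induction with
  | empty => simp
  | cons a s ha ih => rw [Finset.sum_cons, Finset.sum_cons, ← ih, EReal.coe_add]

lemma ereal_sum_ne_bot {α : Type*} (s : Finset α) (f : α → EReal) (h : ∀ a ∈ s, f a ≠ ⊥) :
    ∑ a ∈ s, f a ≠ ⊥ := by
  induction s using Finset.cons_induction with
  | empty => simp
  | cons a s ha ih =>
    rw [Finset.sum_cons, Ne, EReal.add_eq_bot_iff]
    push_neg
    exact ⟨h a (Finset.mem_cons_self a s), ih fun b hb => h b (Finset.mem_cons_of_mem hb)⟩

lemma ereal_sum_eq_top {α : Type*} (s : Finset α) (f : α → EReal) (h : ∀ a ∈ s, f a ≠ ⊥)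
    {a : α} (has : a ∈ s) (ha : f a = ⊤) : ∑ b ∈ s, f b = ⊤ := by
  rw [← Finset.add_sum_erase s f has, ha]
  exact EReal.top_add_of_ne_bot
    (ereal_sum_ne_bot _ _ fun b hb => h b (Finset.mem_of_mem_erase hb))

lemma ereal_coe_mul_ne_bot {c : ℝ} (hc : 0 ≤ c) {x : EReal} (hx : x ≠ ⊥) :
    (c : EReal) * x ≠ ⊥ := by
  rcases eq_or_lt_of_le hc with h | h
  · rw [← h]; simp
  · induction x with
    | bot => exact absurd rfl hx
    | coe r => rw [← EReal.coe_mul]; exact EReal.coe_ne_bot _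
    | top => rw [EReal.coe_mul_top_of_pos h]; simp


lemma klDiv_ne_bot {Y : Type*} [Fintype Y] {π : Y → ℝ} (hπ : ∀ x, 0 ≤ π x)
    (M L : Y → Y → ℝ) : klDiv π M L ≠ ⊥ :=
  ereal_sum_ne_bot _ _ fun x _ =>
    ereal_coe_mul_ne_bot (hπ x) (ereal_sum_ne_bot _ _ fun y _ => klTerm_ne_bot _ _)

lemma klDiv_eq_coe {Y : Type*} [Fintype Y] (π : Y → ℝ) (M L : Y → Y → ℝ)
    (habs : ∀ x y, M x y ≠ 0 → L x y ≠ 0) :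
    klDiv π M L =
      ((∑ x, π x * ∑ y, M x y * Real.log (M x y / L x y) : ℝ) : EReal) := by
  unfold klDiv
  rw [ereal_coe_sum]
  refine Finset.sum_congr rfl fun x _ => ?_
  rw [EReal.coe_mul, ereal_coe_sum]
  congr 1
  refine Finset.sum_congr rfl fun y _ => ?_
  refine klTerm_eq_coe ?_
  by_cases h : M x y = 0
  · exact Or.inl h
  · exact Or.inr (habs x y h)

lemma klDiv_eq_top {Y : Type*} [Fintype Y] {π : Y → ℝ} (hpos : ∀ x, 0 < π x)
    (M L : Y → Y → ℝ) {x y : Y} (hM : M x y ≠ 0) (hL : L x y = 0) :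
    klDiv π M L = ⊤ := by
  unfold klDiv
  have hinner : ∑ y', klTerm (M x y') (L x y') = ⊤ :=
    ereal_sum_eq_top _ _ (fun b _ => klTerm_ne_bot _ _) (Finset.mem_univ y)
      (klTerm_eq_top hM hL)
  refine ereal_sum_eq_top _ _
    (fun b _ => ereal_coe_mul_ne_bot (hpos b).le
      (ereal_sum_ne_bot _ _ fun c _ => klTerm_ne_bot _ _)) (Finset.mem_univ x) ?_
  rw [hinner, EReal.coe_mul_top_of_pos (hpos x)]

lemma point_ineq {q l : ℝ} (hq : 0 ≤ q) (hl : 0 ≤ l) (habs : q ≠ 0 → l ≠ 0) :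
    q - l ≤ q * Real.log (q / l) ∧ (q * Real.log (q / l) = q - l → q = l) := by
  rcases eq_or_lt_of_le hq with h | h
  · refine ⟨by rw [← h]; simpa using hl, fun h2 => ?_⟩
    rw [← h] at h2 ⊢
    simpa using by linarith [h2.symm, (by simpa using h2 : (0:ℝ) = 0 - l)]
  · have hl' : 0 < l := lt_of_le_of_ne hl (Ne.symm (habs h.ne'))
    have hd : 0 < l / q := div_pos hl' h
    have hlogeq : q * Real.log (q / l) = -(q * Real.log (l / q)) := by
      rw [show Real.log (q / l) = -Real.log (l / q) by rw [← Real.log_inv, inv_div]]; ring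
    constructor
    · have h1 : q * Real.log (l / q) ≤ q * (l / q - 1) :=
        mul_le_mul_of_nonneg_left (Real.log_le_sub_one_of_pos hd) h.le
      have h2 : q * (l / q - 1) = l - q := by field_simp
      rw [hlogeq]; linarith
    · intro heq
      by_contra hne
      have hne' : l / q ≠ 1 := by
        rw [Ne, div_eq_one_iff_eq h.ne']
        exact fun hh => hne hh.symm
      have h1 : q * Real.log (l / q) < q * (l / q - 1) :=
        mul_lt_mul_of_pos_left (Real.log_lt_sub_one_of_pos hd hne') h
      have h2 : q * (l / q - 1) = l - q := by field_simp
      rw [hlogeq] at heq; linarith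

lemma gibbs {Y : Type*} [Fintype Y] {q l : Y → ℝ}
    (hq0 : ∀ y, 0 ≤ q y) (hq1 : ∑ y, q y = 1) (hl0 : ∀ y, 0 ≤ l y) (hl1 : ∑ y, l y = 1)
    (habs : ∀ y, q y ≠ 0 → l y ≠ 0) :
    0 ≤ ∑ y, q y * Real.log (q y / l y) ∧
      ((∑ y, q y * Real.log (q y / l y)) = 0 → q = l) := by
  have hpt := fun y => point_ineq (hq0 y) (hl0 y) (habs y)
  have hsum : ∑ y, (q y - l y) ≤ ∑ y, q y * Real.log (q y / l y) :=
    Finset.sum_le_sum fun y _ => (hpt y).1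
  have hzero : ∑ y, (q y - l y) = 0 := by rw [Finset.sum_sub_distrib, hq1, hl1]; ring
  refine ⟨by linarith, fun h0 => ?_⟩
  have heach := (Finset.sum_eq_sum_iff_of_le fun y (_ : y ∈ Finset.univ) => (hpt y).1).1
    (by rw [hzero, h0])
  funext y
  exact (hpt y).2 (heach y (Finset.mem_univ y)).symm



section Marg
variable {d : ℕ} {X : Fin d → Type*} [∀ i, Fintype (X i)]
variable {π : (∀ i, X i) → ℝ} {P : (∀ i, X i) → (∀ i, X i) → ℝ}

lemma margDist_nonneg (hπ0 : ∀ x, 0 ≤ π x) (i : Fin d) (xi : X i) :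
    0 ≤ margDist π i xi := by
  unfold margDist
  refine Finset.sum_nonneg fun x _ => ?_
  split_ifs
  · exact hπ0 x
  · exact le_refl 0

lemma margDist_pos (hpos : ∀ x, 0 < π x) (x0 : ∀ j, X j) (i : Fin d) (xi : X i) :
    0 < margDist π i xi := by
  refine lt_of_lt_of_le (hpos (Function.update x0 i xi)) ?_
  have h := Finset.single_le_sum (f := fun x => if x i = xi then π x else 0)
    (fun x _ => by split_ifs; exacts [(hpos x).le, le_refl 0])
    (Finset.mem_univ (Function.update x0 i xi))
  simpa [Function.update_self, margDist] using h

lemma margDist_sum (i : Fin d) : ∑ xi, margDist π i xi = ∑ x, π x := by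
  unfold margDist
  rw [Finset.sum_comm]
  simp [Finset.sum_ite_eq]

lemma margNum_eq (hpos : ∀ x, 0 < π x) (x0 : ∀ j, X j) (i : Fin d) (xi yi : X i) :
    ∑ x : ∀ j, X j, ∑ y : ∀ j, X j, (if x i = xi ∧ y i = yi then π x * P x y else 0)
      = margDist π i xi * margKer π P i xi yi := by
  unfold margKer
  rw [mul_comm, div_mul_cancel₀ _ (margDist_pos hpos x0 i xi).ne']

lemma margKer_nonneg (hπ0 : ∀ x, 0 ≤ π x) (hP0 : ∀ x y, 0 ≤ P x y) (i : Fin d)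
    (xi yi : X i) : 0 ≤ margKer π P i xi yi := by
  unfold margKer
  refine div_nonneg (Finset.sum_nonneg fun x _ => Finset.sum_nonneg fun y _ => ?_)
    (margDist_nonneg hπ0 i xi)
  split_ifs
  · exact mul_nonneg (hπ0 _) (hP0 _ _)
  · exact le_refl 0

lemma margKer_sum (hpos : ∀ x, 0 < π x) (x0 : ∀ j, X j) (hP1 : ∀ x, ∑ y, P x y = 1)
    (i : Fin d) (xi : X i) : ∑ yi, margKer π P i xi yi = 1 := by
  unfold margKer
  rw [← Finset.sum_div]
  have hnum : ∑ yi, ∑ x : ∀ j, X j, ∑ y : ∀ j, X j,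
      (if x i = xi ∧ y i = yi then π x * P x y else 0) = margDist π i xi := by
    rw [Finset.sum_comm]
    refine Finset.sum_congr rfl fun x _ => ?_
    rw [Finset.sum_comm]
    have hy : ∀ y : ∀ j, X j, ∑ yi, (if x i = xi ∧ y i = yi then π x * P x y else 0)
        = if x i = xi then π x * P x y else 0 := by
      intro y
      simp only [ite_and]
      split_ifs with h
      · simp [Finset.sum_ite_eq]
      · simp
    rw [Finset.sum_congr rfl fun y _ => hy y]
    by_cases h : x i = xi
    · simp only [h, if_true]
      rw [← Finset.mul_sum, hP1 x, mul_one]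
    · simp [h]
  rw [hnum, div_self (margDist_pos hpos x0 i xi).ne']

lemma margKer_pos_of (hpos : ∀ x, 0 < π x) (x0 : ∀ j, X j) (hP0 : ∀ x y, 0 ≤ P x y)
    (i : Fin d) {x y : ∀ j, X j} (hxy : P x y ≠ 0) :
    0 < margKer π P i (x i) (y i) := by
  unfold margKer
  refine div_pos ?_ (margDist_pos hpos x0 i (x i))
  have hterm : 0 < π x * P x y := mul_pos (hpos x) (lt_of_le_of_ne (hP0 x y) (Ne.symm hxy))
  have h1 : π x * P x y ≤ ∑ y' : ∀ j, X j,
      (if x i = x i ∧ y' i = y i then π x * P x y' else 0) := by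
    have := Finset.single_le_sum
      (f := fun y' => if x i = x i ∧ y' i = y i then π x * P x y' else 0)
      (fun y' _ => by split_ifs; exacts [mul_nonneg (hpos x).le (hP0 _ _), le_refl 0])
      (Finset.mem_univ y)
    simpa using this
  have h2 := Finset.single_le_sum
    (f := fun x' => ∑ y' : ∀ j, X j, (if x' i = x i ∧ y' i = y i then π x' * P x' y' else 0))
    (fun x' _ => Finset.sum_nonneg fun y' _ => by
      split_ifs; exacts [mul_nonneg (hpos x').le (hP0 _ _), le_refl 0])
    (Finset.mem_univ x)
  exact lt_of_lt_of_le hterm (le_trans h1 h2)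

lemma exists_of_margKer_ne_zero (i : Fin d) {xi yi : X i}
    (h : margKer π P i xi yi ≠ 0) :
    ∃ x y : ∀ j, X j, x i = xi ∧ y i = yi ∧ P x y ≠ 0 := by
  by_contra hc
  push_neg at hc
  apply h
  unfold margKer
  rw [Finset.sum_eq_zero, zero_div]
  intro x _
  refine Finset.sum_eq_zero fun y _ => ?_
  split_ifs with hcond
  · rw [hc x y hcond.1 hcond.2, mul_zero]
  · rfl

end Marg


section Main
variable {d : ℕ} {X : Fin d → Type*} [∀ i, Fintype (X i)]
variable {π : (∀ i, X i) → ℝ} {P : (∀ i, X i) → (∀ i, X i) → ℝ}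

lemma group_sum (i : Fin d) (g : X i → X i → ℝ) :
    ∑ x : ∀ j, X j, ∑ y : ∀ j, X j, π x * P x y * g (x i) (y i)
      = ∑ xi, ∑ yi, (∑ x : ∀ j, X j, ∑ y : ∀ j, X j,
          if x i = xi ∧ y i = yi then π x * P x y else 0) * g xi yi := by
  have hxy : ∀ (x y : ∀ j, X j), π x * P x y * g (x i) (y i)
      = ∑ xi, ∑ yi, (if x i = xi ∧ y i = yi then π x * P x y * g xi yi else 0) := by
    intro x y
    simp [ite_and, Finset.sum_ite_eq]
  calc ∑ x : ∀ j, X j, ∑ y : ∀ j, X j, π x * P x y * g (x i) (y i)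
      = ∑ x : ∀ j, X j, ∑ y : ∀ j, X j, ∑ xi, ∑ yi,
          (if x i = xi ∧ y i = yi then π x * P x y * g xi yi else 0) :=
        Finset.sum_congr rfl fun x _ => Finset.sum_congr rfl fun y _ => hxy x y
    _ = ∑ x : ∀ j, X j, ∑ xi, ∑ y : ∀ j, X j, ∑ yi,
          (if x i = xi ∧ y i = yi then π x * P x y * g xi yi else 0) :=
        Finset.sum_congr rfl fun x _ => Finset.sum_comm
    _ = ∑ xi, ∑ x : ∀ j, X j, ∑ y : ∀ j, X j, ∑ yi,
          (if x i = xi ∧ y i = yi then π x * P x y * g xi yi else 0) :=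
        Finset.sum_comm
    _ = ∑ xi, ∑ x : ∀ j, X j, ∑ yi, ∑ y : ∀ j, X j,
          (if x i = xi ∧ y i = yi then π x * P x y * g xi yi else 0) :=
        Finset.sum_congr rfl fun xi _ => Finset.sum_congr rfl fun x _ => Finset.sum_comm
    _ = ∑ xi, ∑ yi, ∑ x : ∀ j, X j, ∑ y : ∀ j, X j,
          (if x i = xi ∧ y i = yi then π x * P x y * g xi yi else 0) :=
        Finset.sum_congr rfl fun xi _ => Finset.sum_comm
    _ = ∑ xi, ∑ yi, (∑ x : ∀ j, X j, ∑ y : ∀ j, X j,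
          if x i = xi ∧ y i = yi then π x * P x y else 0) * g xi yi := by
        refine Finset.sum_congr rfl fun xi _ => Finset.sum_congr rfl fun yi _ => ?_
        rw [Finset.sum_mul]
        refine Finset.sum_congr rfl fun x _ => ?_
        rw [Finset.sum_mul]
        refine Finset.sum_congr rfl fun y _ => ?_
        rw [ite_mul, zero_mul]

lemma real_identity (hpos : ∀ x, 0 < π x) (x0 : ∀ j, X j)
    (hP0 : ∀ x y, 0 ≤ P x y)
    (L : ∀ i, X i → X i → ℝ)
    (hcoord : ∀ i xi yi, margKer π P i xi yi ≠ 0 → L i xi yi ≠ 0) :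
    ∑ x : ∀ j, X j, π x * ∑ y : ∀ j, X j, P x y * Real.log (P x y / tensorMat L x y)
      = (∑ x : ∀ j, X j, π x * ∑ y : ∀ j, X j,
          P x y * Real.log (P x y / tensorMat (fun i => margKer π P i) x y))
        + ∑ i, ∑ xi, margDist π i xi *
            ∑ yi, margKer π P i xi yi * Real.log (margKer π P i xi yi / L i xi yi) := by
  have step1 : ∀ x y : ∀ j, X j, P x y * Real.log (P x y / tensorMat L x y)
      = P x y * Real.log (P x y / tensorMat (fun i => margKer π P i) x y)
        + ∑ i, P x y * Real.log (margKer π P i (x i) (y i) / L i (x i) (y i)) := by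
    intro x y
    by_cases hp : P x y = 0
    · simp [hp]
    · have hQi : ∀ i, margKer π P i (x i) (y i) ≠ 0 :=
        fun i => (margKer_pos_of hpos x0 hP0 i hp).ne'
      have hLi : ∀ i, L i (x i) (y i) ≠ 0 := fun i => hcoord i _ _ (hQi i)
      have hprodQ : tensorMat (fun i => margKer π P i) x y ≠ 0 := by
        unfold tensorMat; exact Finset.prod_ne_zero_iff.2 fun i _ => hQi i
      have hprodL : tensorMat L x y ≠ 0 := by
        unfold tensorMat; exact Finset.prod_ne_zero_iff.2 fun i _ => hLi i
      rw [Real.log_div hp hprodL, Real.log_div hp hprodQ]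
      unfold tensorMat
      rw [Real.log_prod (fun i _ => hLi i), Real.log_prod (fun i _ => hQi i)]
      have hsplit : ∑ i, P x y * Real.log (margKer π P i (x i) (y i) / L i (x i) (y i))
          = P x y * ((∑ i, Real.log (margKer π P i (x i) (y i)))
              - ∑ i, Real.log (L i (x i) (y i))) := by
        rw [← Finset.sum_sub_distrib, Finset.mul_sum]
        exact Finset.sum_congr rfl fun i _ => by rw [Real.log_div (hQi i) (hLi i)]
      rw [hsplit]
      ring
  have hsecond : ∑ x : ∀ j, X j, π x * ∑ y : ∀ j, X j, ∑ i,
        P x y * Real.log (margKer π P i (x i) (y i) / L i (x i) (y i))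
      = ∑ i, ∑ xi, margDist π i xi *
          ∑ yi, margKer π P i xi yi * Real.log (margKer π P i xi yi / L i xi yi) := by
    calc ∑ x : ∀ j, X j, π x * ∑ y : ∀ j, X j, ∑ i,
          P x y * Real.log (margKer π P i (x i) (y i) / L i (x i) (y i))
        = ∑ x : ∀ j, X j, ∑ y : ∀ j, X j, ∑ i,
            π x * P x y * Real.log (margKer π P i (x i) (y i) / L i (x i) (y i)) := by
          refine Finset.sum_congr rfl fun x _ => ?_
          rw [Finset.mul_sum]
          refine Finset.sum_congr rfl fun y _ => ?_
          rw [Finset.mul_sum]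
          exact Finset.sum_congr rfl fun i _ => (mul_assoc _ _ _).symm
      _ = ∑ x : ∀ j, X j, ∑ i, ∑ y : ∀ j, X j,
            π x * P x y * Real.log (margKer π P i (x i) (y i) / L i (x i) (y i)) :=
          Finset.sum_congr rfl fun x _ => Finset.sum_comm
      _ = ∑ i, ∑ x : ∀ j, X j, ∑ y : ∀ j, X j,
            π x * P x y * Real.log (margKer π P i (x i) (y i) / L i (x i) (y i)) :=
          Finset.sum_comm
      _ = ∑ i, ∑ xi, ∑ yi, (∑ x : ∀ j, X j, ∑ y : ∀ j, X j,
            if x i = xi ∧ y i = yi then π x * P x y else 0) *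
              Real.log (margKer π P i xi yi / L i xi yi) :=
          Finset.sum_congr rfl fun i _ =>
            group_sum i (fun xi yi => Real.log (margKer π P i xi yi / L i xi yi))
      _ = ∑ i, ∑ xi, margDist π i xi *
            ∑ yi, margKer π P i xi yi * Real.log (margKer π P i xi yi / L i xi yi) := by
          refine Finset.sum_congr rfl fun i _ => Finset.sum_congr rfl fun xi _ => ?_
          rw [Finset.mul_sum]
          refine Finset.sum_congr rfl fun yi _ => ?_
          rw [margNum_eq hpos x0 i xi yi, mul_assoc]
  calc ∑ x : ∀ j, X j, π x * ∑ y : ∀ j, X j, P x y * Real.log (P x y / tensorMat L x y)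
      = ∑ x : ∀ j, X j, (π x * ∑ y : ∀ j, X j,
            P x y * Real.log (P x y / tensorMat (fun i => margKer π P i) x y)
          + π x * ∑ y : ∀ j, X j, ∑ i,
            P x y * Real.log (margKer π P i (x i) (y i) / L i (x i) (y i))) := by
        refine Finset.sum_congr rfl fun x _ => ?_
        rw [← mul_add, ← Finset.sum_add_distrib]
        exact congrArg _ (Finset.sum_congr rfl fun y _ => step1 x y)
    _ = _ := by rw [Finset.sum_add_distrib, hsecond]

end Main




section Master
variable {d : ℕ} {X : Fin d → Type*} [∀ i, Fintype (X i)]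
variable {π : (∀ i, X i) → ℝ} {P : (∀ i, X i) → (∀ i, X i) → ℝ}

lemma klDiv_nonneg' {Y : Type*} [Fintype Y] {p : Y → ℝ} (hpos : ∀ x, 0 < p x)
    {M N : Y → Y → ℝ} (hM : IsTransMat M) (hN : IsTransMat N) : 0 ≤ klDiv p M N := by
  by_cases habs : ∀ x y, M x y ≠ 0 → N x y ≠ 0
  · rw [klDiv_eq_coe _ _ _ habs]
    refine EReal.coe_nonneg.2 (Finset.sum_nonneg fun x _ => mul_nonneg (hpos x).le ?_)
    exact (gibbs (fun y => hM.1 x y) (hM.2 x) (fun y => hN.1 x y) (hN.2 x) (habs x)).1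
  · push_neg at habs
    obtain ⟨x, y, h1, h2⟩ := habs
    rw [klDiv_eq_top hpos _ _ h1 h2]
    exact le_top

lemma nonempty_of_probMass (hπ : IsProbMass π) : Nonempty (∀ j, X j) := by
  by_contra h
  rw [not_nonempty_iff] at h
  have := hπ.2
  rw [Finset.univ_eq_empty, Finset.sum_empty] at this
  exact zero_ne_one this

lemma margKer_isTransMat (hpos : ∀ x, 0 < π x) (x0 : ∀ j, X j) (hP : IsTransMat P)
    (i : Fin d) : IsTransMat (margKer π P i) :=
  ⟨fun xi yi => margKer_nonneg (fun x => (hpos x).le) hP.1 i xi yi,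
    fun xi => margKer_sum hpos x0 hP.2 i xi⟩

lemma pythagoras (hπ : IsProbMass π) (hpos : ∀ x, 0 < π x) (hP : IsTransMat P)
    (L : ∀ i, X i → X i → ℝ) (hL : ∀ i, IsTransMat (L i)) :
    klDiv π P (tensorMat L) =
      klDiv π P (tensorMat fun i => margKer π P i) +
        ∑ i, klDiv (margDist π i) (margKer π P i) (L i) := by
  obtain ⟨x0⟩ := nonempty_of_probMass hπ
  have habsQ : ∀ x y, P x y ≠ 0 → tensorMat (fun i => margKer π P i) x y ≠ 0 := by
    intro x y h
    exact Finset.prod_ne_zero_iff.2 fun i _ => (margKer_pos_of hpos x0 hP.1 i h).ne'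
  by_cases hcoord : ∀ i, ∀ xi yi : X i, margKer π P i xi yi ≠ 0 → L i xi yi ≠ 0
  · have habsL : ∀ x y, P x y ≠ 0 → tensorMat L x y ≠ 0 := by
      intro x y h
      exact Finset.prod_ne_zero_iff.2 fun i _ =>
        hcoord i _ _ (margKer_pos_of hpos x0 hP.1 i h).ne'
    rw [klDiv_eq_coe _ _ _ habsL, klDiv_eq_coe _ _ _ habsQ,
      Finset.sum_congr rfl fun i (_ : i ∈ Finset.univ) =>
        klDiv_eq_coe (margDist π i) (margKer π P i) (L i) (hcoord i),
      ← ereal_coe_sum, ← EReal.coe_add]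
    exact_mod_cast real_identity hpos x0 hP.1 L hcoord
  · push_neg at hcoord
    obtain ⟨i, xi, yi, hQ0, hL0⟩ := hcoord
    have hmargtop : klDiv (margDist π i) (margKer π P i) (L i) = ⊤ :=
      klDiv_eq_top (fun xi' => margDist_pos hpos x0 i xi') _ _ hQ0 hL0
    have hsumtop : ∑ j, klDiv (margDist π j) (margKer π P j) (L j) = ⊤ :=
      ereal_sum_eq_top _ _
        (fun j _ => klDiv_ne_bot (fun xj => (margDist_pos hpos x0 j xj).le) _ _)
        (Finset.mem_univ i) hmargtop
    obtain ⟨x, y, hx, hy, hPxy⟩ := exists_of_margKer_ne_zero i hQ0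
    have hLten : tensorMat L x y = 0 :=
      Finset.prod_eq_zero (Finset.mem_univ i) (by rw [hx, hy]; exact hL0)
    rw [klDiv_eq_top hpos _ _ hPxy hLten, hsumtop,
      EReal.add_top_of_ne_bot (klDiv_ne_bot (fun x => (hpos x).le) _ _)]

lemma kl_min (hπ : IsProbMass π) (hpos : ∀ x, 0 < π x) (hP : IsTransMat P)
    (L : ∀ i, X i → X i → ℝ) (hL : ∀ i, IsTransMat (L i)) :
    klDiv π P (tensorMat fun i => margKer π P i) ≤ klDiv π P (tensorMat L) := by
  obtain ⟨x0⟩ := nonempty_of_probMass hπ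
  rw [pythagoras hπ hpos hP L hL]
  refine le_add_of_nonneg_right (Finset.sum_nonneg fun i _ => ?_)
  exact klDiv_nonneg' (fun xi => margDist_pos hpos x0 i xi)
    (margKer_isTransMat hpos x0 hP i) (hL i)

end Master

section Master2
variable {d : ℕ} {X : Fin d → Type*} [∀ i, Fintype (X i)]
variable {π : (∀ i, X i) → ℝ} {P : (∀ i, X i) → (∀ i, X i) → ℝ}

lemma kl_unique (hπ : IsProbMass π) (hpos : ∀ x, 0 < π x) (hP : IsTransMat P)
    (L : ∀ i, X i → X i → ℝ) (hL : ∀ i, IsTransMat (L i))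
    (h : klDiv π P (tensorMat L) = klDiv π P (tensorMat fun i => margKer π P i)) :
    L = fun i => margKer π P i := by
  obtain ⟨x0⟩ := nonempty_of_probMass hπ
  have habsQ : ∀ x y, P x y ≠ 0 → tensorMat (fun i => margKer π P i) x y ≠ 0 := by
    intro x y hh
    exact Finset.prod_ne_zero_iff.2 fun i _ => (margKer_pos_of hpos x0 hP.1 i hh).ne'
  rw [pythagoras hπ hpos hP L hL, klDiv_eq_coe _ _ _ habsQ] at h
  have hci_nonneg : ∀ i, 0 ≤ klDiv (margDist π i) (margKer π P i) (L i) := fun i =>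
    klDiv_nonneg' (fun xi => margDist_pos hpos x0 i xi)
      (margKer_isTransMat hpos x0 hP i) (hL i)
  have hci_ne_bot : ∀ i, klDiv (margDist π i) (margKer π P i) (L i) ≠ ⊥ := fun i =>
    ((lt_of_lt_of_le (by simp : (⊥ : EReal) < 0) (hci_nonneg i))).ne'
  have hnotop : ∀ i, klDiv (margDist π i) (margKer π P i) (L i) ≠ ⊤ := by
    intro i htop
    have hsumtop : ∑ j, klDiv (margDist π j) (margKer π P j) (L j) = ⊤ :=
      ereal_sum_eq_top _ _ (fun j _ => hci_ne_bot j) (Finset.mem_univ i) htop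
    rw [hsumtop, EReal.add_top_of_ne_bot (EReal.coe_ne_bot _)] at h
    exact EReal.coe_ne_top _ h.symm
  have hcoord : ∀ i, ∀ xi yi : X i, margKer π P i xi yi ≠ 0 → L i xi yi ≠ 0 := by
    intro i xi yi hq
    by_contra hl
    exact hnotop i (klDiv_eq_top (fun xi' => margDist_pos hpos x0 i xi') _ _ hq
      hl)
  rw [Finset.sum_congr rfl fun i (_ : i ∈ Finset.univ) =>
      klDiv_eq_coe (margDist π i) (margKer π P i) (L i) (hcoord i),
    ← ereal_coe_sum, ← EReal.coe_add] at h
  have hreal := EReal.coe_eq_coe_iff.1 h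
  have hsum0 : ∑ i, ∑ xi, margDist π i xi *
      ∑ yi, margKer π P i xi yi * Real.log (margKer π P i xi yi / L i xi yi) = 0 := by
    linarith
  have hrow_nonneg : ∀ (i : Fin d) (xi : X i),
      0 ≤ ∑ yi, margKer π P i xi yi * Real.log (margKer π P i xi yi / L i xi yi) :=
    fun i xi => (gibbs (fun yi => margKer_nonneg (fun x => (hpos x).le) hP.1 i xi yi)
      (margKer_sum hpos x0 hP.2 i xi) (fun yi => (hL i).1 xi yi) ((hL i).2 xi)
      (fun yi => hcoord i xi yi)).1
  have heach := (Finset.sum_eq_zero_iff_of_nonneg fun i _ =>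
    Finset.sum_nonneg fun xi _ =>
      mul_nonneg (margDist_nonneg (fun x => (hpos x).le) i xi) (hrow_nonneg i xi)).1 hsum0
  funext i xi
  have hterm := (Finset.sum_eq_zero_iff_of_nonneg fun xi' _ =>
    mul_nonneg (margDist_nonneg (fun x => (hpos x).le) i xi') (hrow_nonneg i xi')).1
    (heach i (Finset.mem_univ i)) xi (Finset.mem_univ xi)
  have h0 : ∑ yi, margKer π P i xi yi * Real.log (margKer π P i xi yi / L i xi yi) = 0 :=
    (mul_eq_zero.1 hterm).resolve_left (margDist_pos hpos x0 i xi).ne'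
  have hrows := (gibbs (fun yi => margKer_nonneg (fun x => (hpos x).le) hP.1 i xi yi)
      (margKer_sum hpos x0 hP.2 i xi) (fun yi => (hL i).1 xi yi) ((hL i).2 xi)
      (fun yi => hcoord i xi yi)).2 h0
  exact hrows.symm

end Master2

/-- Pythagorean identity for the KL divergence: `D_KL^π(P ‖ ⊗ᵢ Lᵢ)` decomposes as the
divergence to the tensor product of the marginal transition matrices plus the sum of the
marginal divergences; consequently `⊗ᵢ P_π⁽ⁱ⁾` is the unique minimizer and
`𝕀^π(P) = D_KL^π(P ‖ ⊗ᵢ P_π⁽ⁱ⁾)`. -/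
theorem stmt6 {d : ℕ} {X : Fin d → Type*} [∀ i, Fintype (X i)]
    (π : (∀ i, X i) → ℝ) (hπ : IsProbMass π) (hpos : ∀ x, 0 < π x)
    (P : (∀ i, X i) → (∀ i, X i) → ℝ) (hP : IsTransMat P)
    (L : ∀ i, X i → X i → ℝ) (hL : ∀ i, IsTransMat (L i)) :
    klDiv π P (tensorMat L) =
        klDiv π P (tensorMat fun i => margKer π P i) +
          ∑ i, klDiv (margDist π i) (margKer π P i) (L i) ∧
      klDiv π P (tensorMat fun i => margKer π P i) ≤ klDiv π P (tensorMat L) ∧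
      (klDiv π P (tensorMat L) = klDiv π P (tensorMat fun i => margKer π P i) →
        L = fun i => margKer π P i) ∧
      distIndepKL π P = klDiv π P (tensorMat fun i => margKer π P i) := by

  obtain ⟨x0⟩ := nonempty_of_probMass hπ
  refine ⟨pythagoras hπ hpos hP L hL, kl_min hπ hpos hP L hL,
    kl_unique hπ hpos hP L hL, le_antisymm ?_ ?_⟩
  · exact iInf₂_le (fun i => margKer π P i) (fun i => margKer_isTransMat hpos x0 hP i)
  · exact le_iInf₂ fun L' hL' => kl_min hπ hpos hP L' hL'
end
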